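/- Let C be a downset in N^m under the product order (i.e., if y ∈ C and x_i ≤ y_i for all i ∈ [m], then x ∈ C). Then there exists a polynomial p and an integer N such that for all n ≥ N, the number of vectors in C of weight n (where the weight of x is x_1 + x_2 + ⋯ + x_m) equals p(n). -/

import Mathlib

namespace StanleyDownset

open Finset Polynomial

/-- "Eventually polynomial" predicate for functions `ℕ → ℚ`. -/
def EP (f : ℕ → ℚ) : Prop :=
  ∃ p : Polynomial ℚ, ∃ N : ℕ, ∀ n : ℕ, N ≤ n → f n = p.eval (n : ℚ)

lemma EP.congr' {f g : ℕ → ℚ} (hf : EP f) (M : ℕ) (h : ∀ n, M ≤ n → g n = f n) : EP g := by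
  obtain ⟨p, N, hp⟩ := hf
  exact ⟨p, max M N, fun n hn =>
    (h n (le_trans (le_max_left _ _) hn)).trans (hp n (le_trans (le_max_right _ _) hn))⟩

lemma EP.add {f g : ℕ → ℚ} (hf : EP f) (hg : EP g) : EP (fun n => f n + g n) := by
  obtain ⟨p, N, hp⟩ := hf
  obtain ⟨q, M, hq⟩ := hg
  refine ⟨p + q, max N M, fun n hn => ?_⟩
  show f n + g n = _
  rw [Polynomial.eval_add, hp n (le_trans (le_max_left _ _) hn),
    hq n (le_trans (le_max_right _ _) hn)]

lemma EP.finsum {ι : Type*} (s : Finset ι) (F : ι → ℕ → ℚ) (h : ∀ i ∈ s, EP (F i)) :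
    EP (fun n => ∑ i ∈ s, F i n) := by
  classical
  induction s using Finset.induction with
  | empty => exact ⟨0, 0, by simp⟩
  | @insert a s ha ih =>
    have h1 : EP (F a) := h a (mem_insert_self _ _)
    have h2 : EP (fun n => ∑ i ∈ s, F i n) := ih (fun i hi => h i (mem_insert_of_mem hi))
    refine (h1.add h2).congr' 0 (fun n _ => ?_)
    rw [Finset.sum_insert ha]

/-- Shifting by a constant preserves eventual polynomiality. -/
lemma EP.shift {f : ℕ → ℚ} (hf : EP f) (k : ℕ) : EP (fun n => f (n - k)) := by
  obtain ⟨p, N, hp⟩ := hf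
  refine ⟨p.comp (X - C (k : ℚ)), N + k, fun n hn => ?_⟩
  have hk : k ≤ n := le_trans (Nat.le_add_left _ _) hn
  have hN : N ≤ n - k := by omega
  show f (n - k) = _
  rw [hp _ hN, Polynomial.eval_comp]
  congr 1
  simp [Nat.cast_sub hk]

/-- Faulhaber: the sum of `d`-th powers is a polynomial. -/
lemma faulhaber_poly (d : ℕ) :
    ∃ q : Polynomial ℚ, ∀ n : ℕ, (∑ k ∈ range n, (k : ℚ) ^ d) = q.eval (n : ℚ) := by
  refine ⟨∑ i ∈ range (d + 1),
    C (_root_.bernoulli i * ((d + 1).choose i : ℚ) / (d + 1 : ℚ)) * X ^ (d + 1 - i), fun n => ?_⟩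
  rw [sum_range_pow n d]
  rw [Polynomial.eval_finset_sum]
  refine Finset.sum_congr rfl (fun i _ => ?_)
  simp only [Polynomial.eval_mul, Polynomial.eval_C, Polynomial.eval_pow, Polynomial.eval_X]
  ring

/-- Partial sums of polynomial evaluations are polynomial. -/
lemma poly_sum (p : Polynomial ℚ) :
    ∃ q : Polynomial ℚ, ∀ n : ℕ, (∑ k ∈ range n, p.eval (k : ℚ)) = q.eval (n : ℚ) := by
  induction p using Polynomial.induction_on' with
  | add f g hf hg =>
    obtain ⟨qf, hqf⟩ := hf
    obtain ⟨qg, hqg⟩ := hg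
    refine ⟨qf + qg, fun n => ?_⟩
    simp only [Polynomial.eval_add, Finset.sum_add_distrib, hqf n, hqg n]
  | monomial d a =>
    obtain ⟨q, hq⟩ := faulhaber_poly d
    refine ⟨C a * q, fun n => ?_⟩
    simp only [Polynomial.eval_monomial, Polynomial.eval_mul, Polynomial.eval_C, ← hq n,
      Finset.mul_sum]

/-- Partial sums of an eventually polynomial function are eventually polynomial. -/
lemma EP.psum {f : ℕ → ℚ} (hf : EP f) : EP (fun n => ∑ j ∈ range (n + 1), f j) := by
  obtain ⟨p, N, hp⟩ := hf
  obtain ⟨q, hq⟩ := poly_sum p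
  refine ⟨C ((∑ j ∈ range N, f j) - q.eval (N : ℚ)) + q.comp (X + C 1), N, fun n hn => ?_⟩
  have h1 : ∑ j ∈ range (n + 1), f j = (∑ j ∈ range N, f j) + ∑ j ∈ Ico N (n + 1), f j := by
    rw [Finset.range_eq_Ico, Finset.range_eq_Ico, Finset.sum_Ico_consecutive _ (Nat.zero_le N) (by omega),
      ← Finset.range_eq_Ico]
  have h2 : ∑ j ∈ Ico N (n + 1), f j = ∑ j ∈ Ico N (n + 1), p.eval (j : ℚ) :=
    Finset.sum_congr rfl (fun j hj => hp j (Finset.mem_Ico.mp hj).1)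
  have h3 : ∑ j ∈ Ico N (n + 1), p.eval (j : ℚ)
      = (∑ j ∈ range (n + 1), p.eval (j : ℚ)) - ∑ j ∈ range N, p.eval (j : ℚ) := by
    rw [Finset.range_eq_Ico, Finset.range_eq_Ico,
      ← Finset.sum_Ico_consecutive (fun j => p.eval (j : ℚ)) (Nat.zero_le N)
        (by omega : N ≤ n + 1)]
    ring
  show ∑ j ∈ range (n + 1), f j = _
  rw [h1, h2, h3, hq, hq]
  simp only [Polynomial.eval_add, Polynomial.eval_C, Polynomial.eval_comp, Polynomial.eval_X]
  push_cast
  ring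

/-! ### Counting -/

/-- The number of vectors of weight `n` lying in `C`. -/
noncomputable def cnt (m : ℕ) (C : Set (Fin m → ℕ)) (n : ℕ) : ℕ :=
  Nat.card {x : Fin m → ℕ | x ∈ C ∧ ∑ i, x i = n}

lemma finite_slice (m : ℕ) (C : Set (Fin m → ℕ)) (n : ℕ) :
    {x : Fin m → ℕ | x ∈ C ∧ ∑ i, x i = n}.Finite :=
  Set.Finite.subset (Finset.Nat.antidiagonalTuple m n).finite_toSet
    (fun x hx => by simpa [Finset.Nat.mem_antidiagonalTuple] using hx.2)

/-- The corresponding finset. -/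
noncomputable def cf (m : ℕ) (C : Set (Fin m → ℕ)) (n : ℕ) : Finset (Fin m → ℕ) :=
  (finite_slice m C n).toFinset

lemma mem_cf {m : ℕ} {C : Set (Fin m → ℕ)} {n : ℕ} {x : Fin m → ℕ} :
    x ∈ cf m C n ↔ x ∈ C ∧ ∑ i, x i = n := by
  rw [cf, Set.Finite.mem_toFinset, Set.mem_setOf_eq]

lemma cnt_eq_card (m : ℕ) (C : Set (Fin m → ℕ)) (n : ℕ) : cnt m C n = (cf m C n).card := by
  rw [cnt, Nat.card_coe_set_eq, Set.ncard_eq_toFinset_card _ (finite_slice m C n), cf]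

/-- The `k`-th slice of a downset in `ℕ^{m+1}`. -/
def slice {m : ℕ} (C : Set (Fin (m + 1) → ℕ)) (k : ℕ) : Set (Fin m → ℕ) :=
  {x | Fin.cons k x ∈ C}

lemma cf_succ (m : ℕ) (C : Set (Fin (m + 1) → ℕ)) (n : ℕ) :
    cf (m + 1) C n = (range (n + 1)).biUnion
      (fun k => (cf m (slice C k) (n - k)).map ⟨Fin.cons k, Fin.cons_right_injective _⟩) := by
  ext y
  simp only [mem_cf, Finset.mem_biUnion, Finset.mem_range, Finset.mem_map,
    Function.Embedding.coeFn_mk]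
  constructor
  · rintro ⟨hyC, hsum⟩
    rw [Fin.sum_univ_succ] at hsum
    refine ⟨y 0, by omega, Fin.tail y, ⟨?_, ?_⟩, Fin.cons_self_tail y⟩
    · show Fin.cons (y 0) (Fin.tail y) ∈ C
      rw [Fin.cons_self_tail]; exact hyC
    · have h : ∑ i, Fin.tail y i = ∑ i : Fin m, y i.succ := rfl
      omega
  · rintro ⟨k, hk, x, ⟨hxC, hxs⟩, rfl⟩
    refine ⟨hxC, ?_⟩
    rw [Fin.sum_univ_succ]
    simp only [Fin.cons_zero, Fin.cons_succ]
    omega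

lemma cnt_succ (m : ℕ) (C : Set (Fin (m + 1) → ℕ)) (n : ℕ) :
    cnt (m + 1) C n = ∑ k ∈ range (n + 1), cnt m (slice C k) (n - k) := by
  rw [cnt_eq_card, cf_succ, Finset.card_biUnion]
  · exact Finset.sum_congr rfl fun k _ => by rw [Finset.card_map, cnt_eq_card]
  · intro a _ b _ hab
    rw [Function.onFun, Finset.disjoint_left]
    rintro y hy hy'
    simp only [Finset.mem_map, Function.Embedding.coeFn_mk] at hy hy'
    obtain ⟨x, _, rfl⟩ := hy
    obtain ⟨x', _, h⟩ := hy'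
    have h0 := congrFun h 0
    simp only [Fin.cons_zero] at h0
    exact hab h0.symm

lemma slice_downset {m : ℕ} {C : Set (Fin (m + 1) → ℕ)}
    (hC : ∀ x y : Fin (m + 1) → ℕ, y ∈ C → x ≤ y → x ∈ C) (k : ℕ) :
    ∀ x y : Fin m → ℕ, y ∈ slice C k → x ≤ y → x ∈ slice C k :=
  fun x y hy hxy => hC _ _ hy (Fin.cons_le_cons.mpr ⟨le_refl k, hxy⟩)

lemma slice_antitone {m : ℕ} {C : Set (Fin (m + 1) → ℕ)}
    (hC : ∀ x y : Fin (m + 1) → ℕ, y ∈ C → x ≤ y → x ∈ C) {j k : ℕ} (hjk : j ≤ k) :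
    slice C k ⊆ slice C j :=
  fun x hx => hC _ _ hx (Fin.cons_le_cons.mpr ⟨hjk, le_refl x⟩)

/-- The slices of a downset stabilize (a consequence of Dickson's lemma). -/
lemma slice_stab {m : ℕ} (C : Set (Fin (m + 1) → ℕ))
    (hC : ∀ x y : Fin (m + 1) → ℕ, y ∈ C → x ≤ y → x ∈ C) :
    ∃ K : ℕ, ∀ k : ℕ, K ≤ k → slice C k = slice C K := by
  by_contra hcon
  push_neg at hcon
  have h : ∀ K : ℕ, ∃ k, K ≤ k ∧ ∃ x, x ∈ slice C K ∧ x ∉ slice C k := by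
    intro K
    obtain ⟨k, hKk, hne⟩ := hcon K
    have hsub : slice C k ⊆ slice C K := slice_antitone hC hKk
    obtain ⟨x, hx1, hx2⟩ := Set.exists_of_ssubset (ssubset_of_subset_of_ne hsub hne)
    exact ⟨k, hKk, x, hx1, hx2⟩
  choose F hF xw hxw1 hxw2 using h
  set a : ℕ → ℕ := fun j => Nat.rec 0 (fun _ prev => F prev) j with ha
  have hstep : ∀ j, a (j + 1) = F (a j) := fun j => rfl
  have hmono : Monotone a := by
    apply monotone_nat_of_le_succ
    intro j
    rw [hstep]
    exact hF (a j)
  set xs : ℕ → (Fin m → ℕ) := fun j => xw (a j) with hxs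
  have inst : ∀ i : Fin m, IsWellOrder ((fun _ : Fin m => ℕ) i) (· < ·) :=
    fun _ => (inferInstance : IsWellOrder ℕ (· < ·))
  have hpwo : (Set.univ : Set (Fin m → ℕ)).IsPWO :=
    Set.isPWO_of_wellQuasiOrderedLE _
  obtain ⟨i, j, hij, hle⟩ := hpwo.exists_lt (f := xs) (fun n => Set.mem_univ _)
  have h1 : xs j ∈ slice C (a j) := hxw1 (a j)
  have h2 : slice C (a j) ⊆ slice C (a (i + 1)) := slice_antitone hC (hmono hij)
  have h3 : xs i ∈ slice C (a (i + 1)) :=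
    slice_downset hC (a (i + 1)) _ _ (h2 h1) hle
  rw [hstep] at h3
  exact hxw2 (a i) h3

/-- Main induction: the counting function of a downset is eventually polynomial. -/
theorem main : ∀ (m : ℕ) (C : Set (Fin m → ℕ)),
    (∀ x y : Fin m → ℕ, y ∈ C → x ≤ y → x ∈ C) → EP (fun n => (cnt m C n : ℚ)) := by
  intro m
  induction m with
  | zero =>
    intro C _
    refine ⟨0, 1, fun n hn => ?_⟩
    have h : {x : Fin 0 → ℕ | x ∈ C ∧ ∑ i, x i = n} = ∅ := by
      ext x
      simp only [Set.mem_setOf_eq, Set.mem_empty_iff_false, iff_false, not_and]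
      intro _
      simp only [Finset.univ_eq_empty, Finset.sum_empty]
      omega
    simp only [cnt]
    rw [h]
    simp
  | succ m ih =>
    intro C hC
    obtain ⟨K, hK⟩ := slice_stab C hC
    have hEPk : ∀ k : ℕ, EP (fun n => (cnt m (slice C k) n : ℚ)) :=
      fun k => ih (slice C k) (slice_downset hC k)
    -- the head part
    have hF1 : EP (fun n => ∑ k ∈ range K, (cnt m (slice C k) (n - k) : ℚ)) :=
      EP.finsum (range K) (fun k n => (cnt m (slice C k) (n - k) : ℚ))
        (fun k _ => (hEPk k).shift k)
    -- the tail part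
    have hG : EP (fun t => ∑ j ∈ range (t + 1), (cnt m (slice C K) j : ℚ)) :=
      (hEPk K).psum
    have hH : EP (fun n => ∑ j ∈ range ((n - K) + 1), (cnt m (slice C K) j : ℚ)) :=
      hG.shift K
    refine (hF1.add hH).congr' K (fun n hn => ?_)
    have hcast : (cnt (m + 1) C n : ℚ)
        = ∑ k ∈ range (n + 1), (cnt m (slice C k) (n - k) : ℚ) := by
      rw [cnt_succ]; push_cast; rfl
    rw [hcast]
    have hsplit : ∑ k ∈ range (n + 1), (cnt m (slice C k) (n - k) : ℚ)
        = (∑ k ∈ range K, (cnt m (slice C k) (n - k) : ℚ))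
          + ∑ k ∈ Ico K (n + 1), (cnt m (slice C k) (n - k) : ℚ) := by
    -- split the range
      rw [Finset.range_eq_Ico, ← Finset.sum_Ico_consecutive _ (Nat.zero_le K)
        (by omega : K ≤ n + 1), ← Finset.range_eq_Ico]
    rw [hsplit]
    congr 1
    -- tail: all slices equal `slice C K`, then reindex
    have htail1 : ∑ k ∈ Ico K (n + 1), (cnt m (slice C k) (n - k) : ℚ)
        = ∑ k ∈ Ico K (n + 1), (cnt m (slice C K) (n - k) : ℚ) :=
      Finset.sum_congr rfl fun k hk => by rw [hK k (Finset.mem_Ico.mp hk).1]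
    rw [htail1, Finset.sum_Ico_eq_sum_range]
    have hnk : n + 1 - K = (n - K) + 1 := by omega
    rw [hnk]
    rw [← Finset.sum_range_reflect (fun j => (cnt m (slice C K) j : ℚ)) ((n - K) + 1)]
    refine Finset.sum_congr rfl fun i hi => ?_
    have harg : n - (K + i) = n - K + 1 - 1 - i := by omega
    rw [harg]

end StanleyDownset

/-- **Theorem (Stanley).** If `C` is a downset in `ℕ^m` under the product order, then for all
sufficiently large `n` the number of vectors in `C` of weight `n` is given by a polynomial. -/
theorem downset_weight_eventually_polynomial (m : ℕ) (C : Set (Fin m → ℕ))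
    (hC : ∀ x y : Fin m → ℕ, y ∈ C → x ≤ y → x ∈ C) :
    ∃ (p : Polynomial ℚ) (N : ℕ), ∀ n : ℕ, N ≤ n →
      (Nat.card {x : Fin m → ℕ | x ∈ C ∧ ∑ i, x i = n} : ℚ) = p.eval (n : ℚ) := by
  exact StanleyDownset.main m C hC
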